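/- Let p and q be probability vectors on a finite set I with q_i > 0 for all i, and suppose |p_i/q_i - 1| ≤ 1/e for every i ∈ I. Then the relative entropy satisfies D(p‖q) = Σ_i p_i·log(p_i/q_i) ≤ 2·Σ_i |p_i - q_i|. -/

import Mathlib

/-- If `p`, `q` are probability vectors on a finite set with `q` strictly positive and
`|p_i/q_i - 1| ≤ 1/e` for all `i`, then `D(p‖q) ≤ 2·Σ_i |p_i - q_i|`. -/
theorem relative_entropy_le_l1 {I : Type*} [Fintype I] (p q : I → ℝ)
    (hp : ∀ i, 0 ≤ p i) (hq : ∀ i, 0 < q i)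
    (hp1 : ∑ i, p i = 1) (hq1 : ∑ i, q i = 1)
    (hclose : ∀ i, |p i / q i - 1| ≤ (Real.exp 1)⁻¹) :
    ∑ i, p i * Real.log (p i / q i) ≤ 2 * ∑ i, |p i - q i| := by
  have he : (Real.exp 1)⁻¹ ≤ 1 := by
    rw [inv_le_one_iff₀]
    right
    exact Real.one_le_exp (by norm_num)
  have key : ∀ i, p i * Real.log (p i / q i) ≤ (p i - q i) + |p i - q i| := by
    intro i
    set x := p i / q i with hx
    have hq' := hq i
    have hxpos : 0 < x := by
      rcases lt_or_eq_of_le (hp i) with h | h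
      · exact div_pos h hq'
      · exfalso
        have := hclose i
        rw [← hx] at this
        have hx0 : x = 0 := by rw [hx, ← h]; simp
        rw [hx0] at this
        simp at this
        have h5 : (Real.exp 1)⁻¹ * Real.exp 1 = 1 :=
          inv_mul_cancel₀ (Real.exp_pos 1).ne'
        nlinarith [Real.exp_one_gt_d9, Real.exp_pos 1]
    have hlog : Real.log x ≤ x - 1 := Real.log_le_sub_one_of_pos hxpos
    have h1 : p i * Real.log x ≤ p i * (x - 1) :=
      mul_le_mul_of_nonneg_left hlog (hp i)
    have hpx : p i = q i * x := by rw [hx]; field_simp [hq'.ne']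
    have h2 : p i * (x - 1) = (p i - q i) + q i * (x - 1)^2 := by
      rw [hpx]; ring
    have h3 : q i * (x - 1)^2 ≤ |p i - q i| := by
      have habs : |p i - q i| = q i * |x - 1| := by
        have : p i - q i = q i * (x - 1) := by rw [hpx]; ring
        rw [this, abs_mul, abs_of_pos hq']
      rw [habs]
      have h4 : (x - 1)^2 ≤ |x - 1| := by
        have hle : |x - 1| ≤ 1 := le_trans (hclose i) he
        nlinarith [hclose i, abs_nonneg (x - 1), sq_abs (x - 1)]
      nlinarith [hq'.le, abs_nonneg (x - 1)]
    linarith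
  calc ∑ i, p i * Real.log (p i / q i)
      ≤ ∑ i, ((p i - q i) + |p i - q i|) := Finset.sum_le_sum fun i _ => key i
    _ = (∑ i, p i - ∑ i, q i) + ∑ i, |p i - q i| := by
        rw [Finset.sum_add_distrib, Finset.sum_sub_distrib]
    _ = ∑ i, |p i - q i| := by rw [hp1, hq1]; ring
    _ ≤ 2 * ∑ i, |p i - q i| := by
        have : 0 ≤ ∑ i, |p i - q i| := Finset.sum_nonneg fun i _ => abs_nonneg _
        linarith
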